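/- Let I be a homogeneous ideal of R = K[x_1,...,x_n], ℓ a linear form avoiding all primes in ∪_{j} Ass(R/I_⟨j⟩) other than M, and S = R[M/ℓ]. Then I ⊆ IS ∩ R ⊆ Ī, where Ī is the integral closure of I. -/

import Mathlib

open MvPolynomial

noncomputable section

/-- The polynomial ring `R = K[x_1,…,x_n]`. -/
abbrev Rn (K : Type) [Field K] (n : ℕ) : Type := MvPolynomial (Fin n) K

/-- The irrelevant maximal ideal `M = (x_1,…,x_n)`. -/
def Mi (K : Type) [Field K] (n : ℕ) : Ideal (Rn K n) :=
  Ideal.span (Set.range (X : Fin n → Rn K n))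

variable {K : Type} [Field K] {n : ℕ}

/-- `I` is a homogeneous ideal. -/
def IsHomog (I : Ideal (Rn K n)) : Prop :=
  ∀ f ∈ I, ∀ j : ℕ, homogeneousComponent j f ∈ I

/-- `I_⟨j⟩`, the ideal generated by the degree-`j` forms in `I`. -/
def comp (I : Ideal (Rn K n)) (j : ℕ) : Ideal (Rn K n) :=
  Ideal.span {f | f ∈ I ∧ f.IsHomogeneous j}

/-- The saturation `I^sat = I : M^∞`. -/
def sat (I : Ideal (Rn K n)) : Ideal (Rn K n) :=
  ⨆ k : ℕ, I.colon ((Mi K n ^ k : Ideal (Rn K n)) : Set (Rn K n))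

/-- `I : g^∞`. -/
def colonInfty (I : Ideal (Rn K n)) (g : Rn K n) : Ideal (Rn K n) :=
  ⨆ k : ℕ, I.colon (Ideal.span {g ^ k})

/-- The initial degree (order) `o(I)` of a homogeneous ideal. -/
def order (I : Ideal (Rn K n)) : ℕ :=
  sInf {j | ∃ f ∈ I, f ≠ 0 ∧ f.IsHomogeneous j}

/-- The quadratic extension `S = R[M/ℓ] = ∪_k M^k/ℓ^k ⊆ R_ℓ`. -/
def quadExt (ℓ : Rn K n) : Subalgebra (Rn K n) (Localization.Away ℓ) :=
  Algebra.adjoin (Rn K n)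
    {x | ∃ m ∈ Mi K n,
      x * algebraMap (Rn K n) (Localization.Away ℓ) ℓ =
        algebraMap (Rn K n) (Localization.Away ℓ) m}

/-- The contraction `IS ∩ R` of `I` from `S = R[M/ℓ]`. -/
def contraction (I : Ideal (Rn K n)) (ℓ : Rn K n) : Ideal (Rn K n) :=
  Ideal.comap (algebraMap (Rn K n) (quadExt ℓ))
    (Ideal.map (algebraMap (Rn K n) (quadExt ℓ)) I)

/-- `I` is contracted (from a quadratic extension). -/
def IsContracted (I : Ideal (Rn K n)) : Prop :=
  ∃ ℓ : Rn K n, ℓ ≠ 0 ∧ ℓ.IsHomogeneous 1 ∧ I = contraction I ℓ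

/-- `I` is `M`-full. -/
def IsMFull (I : Ideal (Rn K n)) : Prop :=
  ∃ ℓ : Rn K n, ℓ ≠ 0 ∧ ℓ.IsHomogeneous 1 ∧ (I * Mi K n).colon (Ideal.span {ℓ}) = I

/-- The minimal number of generators `μ(I)`. -/
def mu (I : Ideal (Rn K n)) : ℕ :=
  sInf {k | ∃ s : Finset (Rn K n), s.card = k ∧ Ideal.span (s : Set (Rn K n)) = I}

/-- The integral closure of an ideal, as a set: elements satisfying an equation
`a^t + r_1 a^{t-1} + … + r_t = 0` with `r_i ∈ I^i`. -/
def intClo {A : Type} [CommRing A] (I : Ideal A) : Set A :=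
  {a | ∃ (t : ℕ) (r : ℕ → A), 0 < t ∧ (∀ i, 1 ≤ i → i ≤ t → r i ∈ I ^ i) ∧
    a ^ t + ∑ i ∈ Finset.Icc 1 t, r i * a ^ (t - i) = 0}

/-- `I` is integrally closed. -/
def IsIC {A : Type} [CommRing A] (I : Ideal A) : Prop :=
  ∀ a ∈ intClo I, a ∈ I

/-- The class `C`: finite-colength homogeneous ideals with `I + (ℓ) = M^{o(I)} + (ℓ)`
for some nonzero linear form `ℓ`, which are contracted. -/
def InC (I : Ideal (Rn K n)) : Prop :=
  IsHomog I ∧ (∃ m : ℕ, Mi K n ^ m ≤ I) ∧ IsContracted I ∧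
    ∃ ℓ : Rn K n, ℓ ≠ 0 ∧ ℓ.IsHomogeneous 1 ∧
      I + Ideal.span {ℓ} = Mi K n ^ order I + Ideal.span {ℓ}

/-- `(b, dg, φ, π)` is a graded free resolution of the homogeneous ideal `J`:
the `i`-th free module has basis `Fin (b i)` with generators in degrees `dg i`,
the maps are given by matrices with homogeneous entries of the appropriate degrees,
and the complex is exact. -/
def IsGradedRes (J : Ideal (Rn K n)) (b : ℕ → ℕ) (dg : (i : ℕ) → Fin (b i) → ℕ)
    (φ : (i : ℕ) → Matrix (Fin (b i)) (Fin (b (i + 1))) (Rn K n))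
    (π : Fin (b 0) → Rn K n) : Prop :=
  (∀ c, π c ∈ J) ∧ (∀ c, (π c).IsHomogeneous (dg 0 c)) ∧
    J = Ideal.span (Set.range π) ∧
    (∀ i r c, (φ i) r c = 0 ∨ ∃ e, ((φ i) r c).IsHomogeneous e ∧ dg i r + e = dg (i + 1) c) ∧
    LinearMap.ker (Matrix.mulVecLin (Matrix.of fun (_ : Fin 1) c => π c)) =
      LinearMap.range (Matrix.mulVecLin (φ 0)) ∧
    ∀ i, LinearMap.ker (Matrix.mulVecLin (φ i)) = LinearMap.range (Matrix.mulVecLin (φ (i + 1)))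

/-- `reg J ≤ m`: `J` admits a graded free resolution with `i`-th shifts at most `m + i`. -/
def RegLE (J : Ideal (Rn K n)) (m : ℕ) : Prop :=
  ∃ b dg φ π, IsGradedRes J b dg φ π ∧ ∀ i c, dg i c ≤ m + i

/-- The Castelnuovo–Mumford regularity of a homogeneous ideal. -/
def regId (J : Ideal (Rn K n)) : ℕ := sInf {m | RegLE J m}

/-- `J` has a linear resolution (generated in degree `d` with `i`-th syzygies in degree `d+i`). -/
def HasLinRes (J : Ideal (Rn K n)) (d : ℕ) : Prop :=
  ∃ b dg φ π, IsGradedRes J b dg φ π ∧ ∀ i c, dg i c = d + i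

/-- `I` is componentwise linear. -/
def CompLinear (I : Ideal (Rn K n)) : Prop :=
  ∀ d : ℕ, HasLinRes (comp I d) d



section AuxStmt7
set_option maxHeartbeats 1000000
set_option synthInstance.maxHeartbeats 100000

section NoethAux
variable {A : Type} [CommRing A] [IsNoetherianRing A]

lemma ass1 (J : Ideal A) (g : A)
    (hAss : ∀ P ∈ associatedPrimes A (A ⧸ J), g ∈ P) : ∃ s, g ^ s ∈ J := by
  set f : ℕ →o Ideal A :=
    ⟨fun s => J.colon (Ideal.span {g ^ s}), by
      intro s t hst
      refine Submodule.colon_mono le_rfl ?_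
      rw [SetLike.coe_subset_coe, Ideal.span_singleton_le_span_singleton]
      exact pow_dvd_pow g hst⟩ with hf
  obtain ⟨s₀, hs₀⟩ := monotone_stabilizes_iff_noetherian.mpr
    (inferInstance : IsNoetherian A A) f
  by_cases htop : (1 : A) ∈ f s₀
  · refine ⟨s₀, ?_⟩
    have := Ideal.mem_colon_span_singleton.mp htop
    rwa [one_mul] at this
  -- the quotient A ⧸ f s₀ is nontrivial
  have hne : (f s₀ : Ideal A) ≠ ⊤ := fun h => htop (h ▸ trivial)
  have : Nontrivial (A ⧸ (f s₀ : Ideal A)) := Submodule.Quotient.nontrivial_iff.mpr hne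
  obtain ⟨P, hP⟩ := associatedPrimes.nonempty A (A ⧸ (f s₀ : Ideal A))
  -- transfer along injection into A ⧸ J via multiplication by g ^ s₀
  have hle : (f s₀ : Ideal A) ≤ Submodule.comap (LinearMap.mulLeft A (g ^ s₀)) J := by
    intro z hz
    have := Ideal.mem_colon_span_singleton.mp hz
    simp only [Submodule.mem_comap, LinearMap.mulLeft_apply]
    rwa [mul_comm] at this
  set ψ : (A ⧸ (f s₀ : Ideal A)) →ₗ[A] A ⧸ J :=
    Submodule.mapQ _ _ (LinearMap.mulLeft A (g ^ s₀)) hle with hψ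
  have hinj : Function.Injective ψ := by
    rw [← LinearMap.ker_eq_bot]
    refine Submodule.ker_liftQ_eq_bot _ _ _ ?_
    intro z hz
    simp only [LinearMap.mem_ker, LinearMap.comp_apply] at hz
    rw [LinearMap.mulLeft_apply] at hz
    have : g ^ s₀ * z ∈ J := by
      rw [Submodule.mkQ_apply] at hz
      rwa [← Submodule.Quotient.mk_eq_zero J]
    exact Ideal.mem_colon_span_singleton.mpr (by rwa [mul_comm] at this)
  have hPJ : P ∈ associatedPrimes A (A ⧸ J) :=
    associatedPrimes.subset_of_injective (f := ψ) hinj hP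
  have hgP : g ∈ P := hAss P hPJ
  obtain ⟨hprime, z, hz⟩ := isAssociatedPrime_iff.mp hP
  -- g • z = 0 in the quotient
  obtain ⟨w, rfl⟩ := Submodule.Quotient.mk_surjective _ z
  have hgz : g • (Submodule.Quotient.mk w : A ⧸ (f s₀ : Ideal A)) = 0 := by
    have := hz ▸ hgP
    rwa [Submodule.mem_colon_singleton, Submodule.mem_bot] at this
  have hw : g * w ∈ (f s₀ : Ideal A) := by
    rwa [← Submodule.Quotient.mk_smul, Submodule.Quotient.mk_eq_zero, smul_eq_mul] at hgz
  -- then w ∈ f (s₀ + 1) = f s₀, so z = 0, contradiction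
  have hw' : w ∈ (f (s₀ + 1) : Ideal A) := by
    apply Ideal.mem_colon_span_singleton.mpr
    have := Ideal.mem_colon_span_singleton.mp hw
    rw [pow_succ]
    ring_nf
    ring_nf at this
    convert this using 1
    ring
  rw [← hs₀ (s₀ + 1) (Nat.le_succ _)] at hw'
  have hz0 : (Submodule.Quotient.mk w : A ⧸ (f s₀ : Ideal A)) = 0 :=
    (Submodule.Quotient.mk_eq_zero _).mpr hw'
  rw [hz0] at hz
  rw [Submodule.colon_singleton_zero] at hz
  exact absurd hz hprime.ne_top

end NoethAux

variable {K : Type} [Field K] {n : ℕ}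

lemma degree_add (a b : Fin n →₀ ℕ) : (a + b).degree = a.degree + b.degree := by
  simp only [Finsupp.degree_eq_weight_one]
  exact map_add _ a b

lemma degree_single (a : Fin n) (b : ℕ) : (Finsupp.single a b).degree = b := by
  simp only [Finsupp.degree_eq_weight_one, Finsupp.weight_apply, Finsupp.sum_single_index,
    smul_eq_mul, Pi.one_apply, mul_one]

/-- monomials lie in the appropriate power of `Mi`. -/
lemma monomial_mem_Mi_pow (s : Fin n →₀ ℕ) (c : K) :
    monomial s c ∈ Mi K n ^ s.degree := by
  induction s using Finsupp.induction generalizing c with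
  | zero => simp [map_zero]
  | single_add a b f ha hb ih =>
      have h1 : monomial (Finsupp.single a b + f) c
          = (X a ^ b) * monomial f c := by
        rw [X_pow_eq_monomial, monomial_mul, one_mul]
      rw [h1, degree_add, degree_single, pow_add]
      exact Ideal.mul_mem_mul
        (Ideal.pow_mem_pow (Ideal.subset_span (Set.mem_range_self a)) b) (ih c)

lemma mem_Mi_pow_of_isHomogeneous {p : Rn K n} {e : ℕ} (hp : p.IsHomogeneous e) :
    p ∈ Mi K n ^ e := by
  rw [← p.support_sum_monomial_coeff]
  refine Ideal.sum_mem _ fun s hs => ?_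
  have : s.degree = e := by
    have := hp (mem_support_iff.mp hs)
    rwa [Finsupp.degree_eq_weight_one]
  rw [← this]
  exact monomial_mem_Mi_pow s _

/-- key product rule for homogeneous components. -/
lemma hc_mul_homog {p q : Rn K n} {d : ℕ} (hp : p.IsHomogeneous d) (e : ℕ) :
    homogeneousComponent e (p * q) =
      if d ≤ e then p * homogeneousComponent (e - d) q else 0 := by
  conv_lhs => rw [← q.sum_homogeneousComponent]
  rw [Finset.mul_sum, map_sum]
  have hterm : ∀ i, homogeneousComponent e (p * homogeneousComponent i q)
      = if e = d + i then p * homogeneousComponent i q else 0 := by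
    intro i
    exact homogeneousComponent_of_mem
      (hp.mul (homogeneousComponent_isHomogeneous i q))
  simp_rw [hterm]
  by_cases hde : d ≤ e
  · have : ∀ i, (e = d + i) ↔ (i = e - d) := by omega
    simp_rw [this]
    rw [Finset.sum_ite_eq' (Finset.range (q.totalDegree + 1)) (e - d)
      (fun i => p * homogeneousComponent i q)]
    by_cases hr : e - d ∈ Finset.range (q.totalDegree + 1)
    · simp [hr, hde]
    · rw [if_neg hr, if_pos hde]
      have : homogeneousComponent (e - d) q = 0 := by
        apply homogeneousComponent_eq_zero
        simp only [Finset.mem_range, not_lt] at hr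
        omega
      simp [this]
  · rw [if_neg hde]
    apply Finset.sum_eq_zero
    intro i _
    rw [if_neg (by omega)]

/-- The ideal of polynomials whose components lie in `Mi^k` and vanish below `k`. -/
def Tk (K : Type) [Field K] (n k : ℕ) : Ideal (Rn K n) where
  carrier := {q | ∀ e, homogeneousComponent e q ∈ Mi K n ^ k ∧ (e < k → homogeneousComponent e q = 0)}
  add_mem' := by
    intro a b ha hb e
    rw [map_add]
    exact ⟨Ideal.add_mem _ (ha e).1 (hb e).1, fun h => by rw [(ha e).2 h, (hb e).2 h, add_zero]⟩
  zero_mem' := by intro e; simp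
  smul_mem' := by
    intro r q hq e
    simp only [smul_eq_mul]
    have hqe : r * q = ∑ i ∈ Finset.range (q.totalDegree + 1),
        (homogeneousComponent i q) * r := by
      conv_lhs => rw [← q.sum_homogeneousComponent]
      rw [Finset.mul_sum]
      exact Finset.sum_congr rfl fun i _ => mul_comm r _
    rw [hqe, map_sum]
    constructor
    · refine Ideal.sum_mem _ fun i _ => ?_
      rw [hc_mul_homog (homogeneousComponent_isHomogeneous i q) e]
      split
      · exact Ideal.mul_mem_right _ _ (hq i).1
      · exact Ideal.zero_mem _
    · intro he
      refine Finset.sum_eq_zero fun i _ => ?_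
      rw [hc_mul_homog (homogeneousComponent_isHomogeneous i q) e]
      split
      · next hie =>
          have : i < k := lt_of_le_of_lt hie he
          rw [(hq i).2 this, zero_mul]
      · rfl

lemma Mi_le_Tk1 : Mi K n ≤ Tk K n 1 := by
  rw [Mi, Ideal.span_le]
  rintro _ ⟨j, rfl⟩
  intro e
  have hX : (X j : Rn K n) ∈ homogeneousSubmodule (Fin n) K 1 := isHomogeneous_X K j
  rw [homogeneousComponent_of_mem hX]
  constructor
  · split
    · next h => subst h; rw [pow_one]; exact Ideal.subset_span (Set.mem_range_self j)
    · exact Ideal.zero_mem _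
  · intro he
    rw [if_neg (by omega)]

lemma Mi_pow_le_Tk (k : ℕ) : Mi K n ^ k ≤ Tk K n k := by
  induction k with
  | zero =>
      intro q _ e
      exact ⟨by simp, by omega⟩
  | succ k ih =>
      rw [pow_succ]
      refine Ideal.mul_le.mpr fun a ha b hb => ?_
      intro e
      have hab : a * b = ∑ i ∈ Finset.range (a.totalDegree + 1),
          (homogeneousComponent i a) * b := by
        conv_lhs => rw [← a.sum_homogeneousComponent, Finset.sum_mul]
      rw [hab, map_sum]
      have hterm : ∀ i, homogeneousComponent e ((homogeneousComponent i a) * b)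
          = if i ≤ e then (homogeneousComponent i a) * homogeneousComponent (e - i) b else 0 :=
        fun i => hc_mul_homog (homogeneousComponent_isHomogeneous i a) e
      have ha' := ih ha
      have hb' := Mi_le_Tk1 hb
      constructor
      · refine Ideal.sum_mem _ fun i _ => ?_
        rw [hterm i]; split
        · rw [pow_succ]
          exact Ideal.mul_mem_mul (ha' i).1 (by simpa using (hb' (e - i)).1)
        · exact Ideal.zero_mem _
      · intro he
        refine Finset.sum_eq_zero fun i _ => ?_
        rw [hterm i]; split
        · next hie =>
            by_cases hik : i < k
            · rw [(ha' i).2 hik, zero_mul]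
            · have : e - i < 1 := by omega
              rw [(hb' (e - i)).2 this, mul_zero]
        · rfl

lemma hc_mem_Mi_pow {q : Rn K n} {k : ℕ} (hq : q ∈ Mi K n ^ k) (e : ℕ) :
    homogeneousComponent e q ∈ Mi K n ^ k := (Mi_pow_le_Tk k hq e).1

lemma hc_eq_zero_of_mem_Mi_pow {q : Rn K n} {k e : ℕ} (hq : q ∈ Mi K n ^ k) (he : e < k) :
    homogeneousComponent e q = 0 := (Mi_pow_le_Tk k hq e).2 he

/-- split a finsupp into a part of given degree and a remainder. -/
lemma finsupp_split (s : Fin n →₀ ℕ) :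
    ∀ t, t ≤ s.degree → ∃ s1 s2 : Fin n →₀ ℕ, s = s1 + s2 ∧ s1.degree = t := by
  induction s using Finsupp.induction with
  | zero =>
      intro t ht
      simp only [map_zero, Nat.le_zero] at ht
      exact ⟨0, 0, by simp, by simp [ht]⟩
  | single_add a b f ha hb ih =>
      intro t ht
      rw [degree_add, degree_single] at ht
      by_cases htb : t ≤ b
      · refine ⟨Finsupp.single a t, Finsupp.single a (b - t) + f, ?_, degree_single a t⟩
        rw [← add_assoc, ← Finsupp.single_add]
        congr 1
        · congr 1
          omega
      · obtain ⟨f1, f2, hf, hdeg⟩ := ih (t - b) (by omega)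
        refine ⟨Finsupp.single a b + f1, f2, ?_, ?_⟩
        · rw [hf, add_assoc]
        · rw [degree_add, degree_single, hdeg]
          omega

/-- L-C : homogeneous element of `I` of degree `i ≤ d` times a form of degree `≥ d - i`
lands in `comp I d`. -/
lemma mul_homog_mem_comp {I : Ideal (Rn K n)} {p g : Rn K n} {i d j : ℕ}
    (hpI : p ∈ I) (hp : p.IsHomogeneous i) (hid : i ≤ d) (hg : g.IsHomogeneous j)
    (hj : d - i ≤ j) : p * g ∈ comp I d := by
  rw [← g.support_sum_monomial_coeff, Finset.mul_sum]
  refine Ideal.sum_mem _ fun s hs => ?_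
  have hdeg : s.degree = j := by
    have := hg (mem_support_iff.mp hs)
    rwa [Finsupp.degree_eq_weight_one]
  obtain ⟨s1, s2, hsplit, hs1⟩ := finsupp_split s (d - i) (by omega)
  have : (monomial s) (coeff s g) = monomial s1 (coeff s g) * monomial s2 1 := by
    rw [monomial_mul, mul_one, hsplit]
  rw [this, ← mul_assoc]
  refine Ideal.mul_mem_right _ _ (Ideal.subset_span ⟨Ideal.mul_mem_right _ _ hpI, ?_⟩)
  have hmono : IsHomogeneous ((monomial s1) (coeff s g)) (d - i) :=
    isHomogeneous_monomial _ hs1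
  have := hp.mul hmono
  convert this using 1
  omega

/-- L-A : components of elements of `I * Mi^k`. -/
lemma hc_mem_comp_of_mem_mul {I : Ideal (Rn K n)} (hI : IsHomog I) {k : ℕ} {w : Rn K n}
    (hw : w ∈ I * Mi K n ^ k) (d : ℕ) :
    homogeneousComponent (d + k) w ∈ comp I d := by
  refine Submodule.mul_induction_on hw ?_ ?_
  · intro a haI m hm
    have hexp : a * m = ∑ i ∈ Finset.range (a.totalDegree + 1),
        (homogeneousComponent i a) * m := by
      conv_lhs => rw [← a.sum_homogeneousComponent, Finset.sum_mul]
    rw [hexp, map_sum]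
    refine Ideal.sum_mem _ fun i _ => ?_
    rw [hc_mul_homog (homogeneousComponent_isHomogeneous i a) (d + k)]
    split
    · next hi =>
        by_cases hjk : d + k - i < k
        · rw [hc_eq_zero_of_mem_Mi_pow hm hjk, mul_zero]
          exact Ideal.zero_mem _
        · exact mul_homog_mem_comp (hI a haI i) (homogeneousComponent_isHomogeneous i a)
            (by omega) (homogeneousComponent_isHomogeneous _ m) (by omega)
    · exact Ideal.zero_mem _
  · intro a b ha hb
    rw [map_add]
    exact Ideal.add_mem _ ha hb

/-- L-B : components of elements of `comp I d` in degree `d + e` lie in `I * Mi^e`. -/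
lemma hc_comp_mem_mul {I : Ideal (Rn K n)} {d : ℕ} {z : Rn K n} (hz : z ∈ comp I d) :
    (∀ e, homogeneousComponent (d + e) z ∈ I * Mi K n ^ e) ∧
      (∀ c, c < d → homogeneousComponent c z = 0) := by
  refine Submodule.span_induction ?_ ?_ ?_ ?_ hz
  · rintro f ⟨hfI, hf⟩
    constructor
    · intro e
      rw [homogeneousComponent_of_mem hf]
      split
      · next h =>
          have : e = 0 := by omega
          subst this
          rw [pow_zero, mul_one]
          exact hfI
      · exact Ideal.zero_mem _
    · intro c hc
      rw [homogeneousComponent_of_mem hf, if_neg (by omega)]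
  · exact ⟨fun e => by simp, fun c _ => by simp⟩
  · intro a b _ _ ha hb
    exact ⟨fun e => by rw [map_add]; exact Ideal.add_mem _ (ha.1 e) (hb.1 e),
      fun c hc => by rw [map_add, ha.2 c hc, hb.2 c hc, add_zero]⟩
  · intro r z _ hzp
    simp only [smul_eq_mul]
    have hexp : r * z = ∑ i ∈ Finset.range (z.totalDegree + 1),
        (homogeneousComponent i z) * r := by
      conv_lhs => rw [← z.sum_homogeneousComponent, Finset.mul_sum]
      exact Finset.sum_congr rfl fun i _ => mul_comm r _
    constructor
    · intro e
      rw [hexp, map_sum]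
      refine Ideal.sum_mem _ fun i _ => ?_
      rw [hc_mul_homog (homogeneousComponent_isHomogeneous i z) (d + e)]
      split
      · next hi =>
          by_cases hid : i < d
          · rw [hzp.2 i hid, zero_mul]
            exact Ideal.zero_mem _
          · have h1 : homogeneousComponent i z ∈ I * Mi K n ^ (i - d) := by
              have := hzp.1 (i - d)
              rwa [Nat.add_sub_cancel' (by omega)] at this
            have h2 : homogeneousComponent (d + e - i) r ∈ Mi K n ^ (d + e - i) :=
              mem_Mi_pow_of_isHomogeneous (homogeneousComponent_isHomogeneous _ r)
            have := Ideal.mul_mem_mul h1 h2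
            rw [mul_assoc, ← pow_add] at this
            have harith : i - d + (d + e - i) = e := by omega
            rwa [harith] at this
      · exact Ideal.zero_mem _
    · intro c hc
      rw [hexp, map_sum]
      refine Finset.sum_eq_zero fun i _ => ?_
      rw [hc_mul_homog (homogeneousComponent_isHomogeneous i z) c]
      split
      · next hi =>
          rw [hzp.2 i (by omega), zero_mul]
      · rfl

lemma ass2 (C : Ideal (Rn K n)) (ℓ : Rn K n)
    (hC : ∀ P ∈ associatedPrimes (Rn K n) (Rn K n ⧸ C), P ≠ Mi K n → ℓ ∉ P)
    {y : Rn K n} {k : ℕ} (h : ℓ ^ k * y ∈ C) :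
    ∃ m, ∀ q ∈ Mi K n ^ m, q * y ∈ C := by
  set J : Ideal (Rn K n) := C.colon (Ideal.span {y}) with hJ
  have hlkJ : ℓ ^ k ∈ J := Ideal.mem_colon_span_singleton.mpr h
  have hle : J ≤ Submodule.comap (LinearMap.mulLeft (Rn K n) y) C := by
    intro z hz
    have := Ideal.mem_colon_span_singleton.mp hz
    simp only [Submodule.mem_comap, LinearMap.mulLeft_apply]
    rwa [mul_comm] at this
  set ψ : (Rn K n ⧸ J) →ₗ[Rn K n] Rn K n ⧸ C :=
    Submodule.mapQ _ _ (LinearMap.mulLeft (Rn K n) y) hle with hψ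
  have hinj : Function.Injective ψ := by
    rw [← LinearMap.ker_eq_bot]
    refine Submodule.ker_liftQ_eq_bot _ _ _ ?_
    intro z hz
    simp only [LinearMap.mem_ker, LinearMap.comp_apply, LinearMap.mulLeft_apply,
      Submodule.mkQ_apply] at hz
    have : y * z ∈ C := by rwa [← Submodule.Quotient.mk_eq_zero C]
    exact Ideal.mem_colon_span_singleton.mpr (by rwa [mul_comm] at this)
  have hAssJ : ∀ P ∈ associatedPrimes (Rn K n) (Rn K n ⧸ J), ∀ i : Fin n, X i ∈ P := by
    intro P hP i
    have hPC : P ∈ associatedPrimes (Rn K n) (Rn K n ⧸ C) :=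
      associatedPrimes.subset_of_injective (f := ψ) hinj hP
    obtain ⟨hprime, z, hz⟩ := isAssociatedPrime_iff.mp hP
    have hJP : J ≤ P := by
      rw [hz]
      intro u hu
      rw [Submodule.mem_colon_singleton, Submodule.mem_bot]
      obtain ⟨w, rfl⟩ := Submodule.Quotient.mk_surjective _ z
      rw [← Submodule.Quotient.mk_smul, Submodule.Quotient.mk_eq_zero, smul_eq_mul]
      exact Ideal.mul_mem_right _ _ hu
    have hlP : ℓ ∈ P := hprime.mem_of_pow_mem k (hJP hlkJ)
    have hPM : P = Mi K n := by
      by_contra hne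
      exact hC P hPC hne hlP
    rw [hPM]
    exact Ideal.subset_span (Set.mem_range_self i)
  have hXs : ∀ i : Fin n, ∃ s, (X i : Rn K n) ^ s ∈ J := by
    intro i
    exact ass1 J (X i) (fun P hP => hAssJ P hP i)
  have hrad : Mi K n ≤ J.radical := by
    rw [Mi, Ideal.span_le]
    rintro _ ⟨i, rfl⟩
    obtain ⟨s, hs⟩ := hXs i
    exact Ideal.mem_radical_iff.mpr ⟨s, hs⟩
  have hfg : (Mi K n).FG := Submodule.fg_span (Set.finite_range _)
  obtain ⟨m, hm⟩ := Ideal.exists_pow_le_of_le_radical_of_fg hrad hfg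
  refine ⟨m, fun q hq => ?_⟩
  have := Ideal.mem_colon_span_singleton.mp (hm hq)
  exact this
section

variable {ℓ : Rn K n} (hℓM : ℓ ∈ Mi K n)

include hℓM in
lemma quadExt_dilute {m : Rn K n} {k j : ℕ} (hm : m ∈ Mi K n ^ k) :
    m * ℓ ^ j ∈ Mi K n ^ (k + j) := by
  rw [pow_add]
  exact Ideal.mul_mem_mul hm (Ideal.pow_mem_pow hℓM j)

include hℓM in
lemma quadExt_dilute' {I : Ideal (Rn K n)} {m : Rn K n} {k j : ℕ}
    (hm : m ∈ I * Mi K n ^ k) : m * ℓ ^ j ∈ I * Mi K n ^ (k + j) := by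
  have h := Ideal.mul_mem_mul hm (Ideal.pow_mem_pow hℓM j)
  rwa [mul_assoc, ← pow_add] at h

include hℓM in
lemma quadExt_denom {s : Localization.Away ℓ} (hs : s ∈ quadExt ℓ) :
    ∃ (k : ℕ) (m : Rn K n), m ∈ Mi K n ^ k ∧
      s * (algebraMap (Rn K n) (Localization.Away ℓ) ℓ) ^ k
        = algebraMap (Rn K n) (Localization.Away ℓ) m := by
  induction hs using Algebra.adjoin_induction with
  | mem x hx =>
      obtain ⟨m, hm, hx⟩ := hx
      exact ⟨1, m, by rwa [pow_one], by rwa [pow_one]⟩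
  | algebraMap r => exact ⟨0, r, by simp, by simp⟩
  | add x y _ _ hx hy =>
      obtain ⟨k1, m1, hm1, he1⟩ := hx
      obtain ⟨k2, m2, hm2, he2⟩ := hy
      refine ⟨k1 + k2, m1 * ℓ ^ k2 + m2 * ℓ ^ k1, ?_, ?_⟩
      · exact Ideal.add_mem _ (quadExt_dilute hℓM hm1)
          (by rw [add_comm k1 k2]; exact quadExt_dilute hℓM hm2)
      · rw [map_add, map_mul, map_mul, map_pow, map_pow, ← he1, ← he2]
        ring
  | mul x y _ _ hx hy =>
      obtain ⟨k1, m1, hm1, he1⟩ := hx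
      obtain ⟨k2, m2, hm2, he2⟩ := hy
      refine ⟨k1 + k2, m1 * m2, ?_, ?_⟩
      · rw [pow_add]; exact Ideal.mul_mem_mul hm1 hm2
      · rw [map_mul, ← he1, ← he2]
        ring

include hℓM in
lemma contraction_denom {I : Ideal (Rn K n)} {x : Rn K n} (hx : x ∈ contraction I ℓ) :
    ∃ (k : ℕ) (m : Rn K n), m ∈ I * Mi K n ^ k ∧
      algebraMap (Rn K n) (Localization.Away ℓ) (ℓ ^ k * x)
        = algebraMap (Rn K n) (Localization.Away ℓ) m := by
  rw [contraction, Ideal.mem_comap] at hx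
  have key : ∀ w : quadExt ℓ, w ∈ Ideal.map (algebraMap (Rn K n) (quadExt ℓ)) I →
      ∃ (k : ℕ) (m : Rn K n), m ∈ I * Mi K n ^ k ∧
        (w : Localization.Away ℓ) * (algebraMap (Rn K n) (Localization.Away ℓ) ℓ) ^ k
          = algebraMap (Rn K n) (Localization.Away ℓ) m := by
    intro w hw
    rw [Ideal.map, ← Ideal.submodule_span_eq] at hw
    refine Submodule.span_induction ?_ ?_ ?_ ?_ hw
    · rintro _ ⟨a, ha, rfl⟩
      refine ⟨0, a, by simpa using ha, by simp⟩
    · exact ⟨0, 0, by simp, by simp⟩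
    · rintro u v _ _ ⟨k1, m1, hm1, he1⟩ ⟨k2, m2, hm2, he2⟩
      refine ⟨k1 + k2, m1 * ℓ ^ k2 + m2 * ℓ ^ k1, ?_, ?_⟩
      · exact Ideal.add_mem _ (quadExt_dilute' hℓM hm1)
          (by rw [add_comm k1 k2]; exact quadExt_dilute' hℓM hm2)
      · rw [Subalgebra.coe_add, map_add, map_mul, map_mul, map_pow, map_pow, ← he1, ← he2]
        ring
    · rintro s u hu ⟨k1, m1, hm1, he1⟩
      obtain ⟨k2, m2, hm2, he2⟩ := quadExt_denom hℓM s.2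
      refine ⟨k1 + k2, m1 * m2, ?_, ?_⟩
      · have h := Ideal.mul_mem_mul hm1 hm2
        rwa [mul_assoc, ← pow_add] at h
      · rw [smul_eq_mul, Subalgebra.coe_mul, map_mul, ← he1, ← he2]
        ring
  obtain ⟨k, m, hm, he⟩ := key _ hx
  refine ⟨k, m, hm, ?_⟩
  rw [map_mul, map_pow, mul_comm]
  rw [← he]
  congr 1

end
lemma det_trick {I : Ideal (Rn K n)} {x : Rn K n} (hn : 0 < n) {m : ℕ}
    (hx : ∀ q ∈ Mi K n ^ m, x * q ∈ I * Mi K n ^ m) : x ∈ intClo I := by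
  set N : Ideal (Rn K n) := Mi K n ^ m with hN
  -- the module N is finite
  haveI : Module.Finite (Rn K n) N := Module.Finite.iff_fg.mpr (IsNoetherian.noetherian N)
  have hmaps : ∀ z ∈ N, x * z ∈ N := fun z hz => Ideal.mul_le_right (hx z hz)
  set φ : N →ₗ[Rn K n] N := (LinearMap.mulLeft (Rn K n) x).restrict hmaps with hφ
  have hrange : LinearMap.range φ ≤ I • (⊤ : Submodule (Rn K n) N) := by
    rintro _ ⟨w, rfl⟩
    have h1 : (φ w : Rn K n) = x * (w : Rn K n) := rfl
    have h2 : (φ w : Rn K n) ∈ I • (N : Submodule (Rn K n) (Rn K n)) := by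
      rw [h1, Ideal.smul_eq_mul]
      exact hx _ w.2
    have h3 : (I • (⊤ : Submodule (Rn K n) N)).map N.subtype
        = I • (N : Submodule (Rn K n) (Rn K n)) := by
      rw [Submodule.map_smul'', Submodule.map_subtype_top]
    rw [← h3] at h2
    obtain ⟨y, hy, hye⟩ := h2
    have : y = φ w := Subtype.ext (by simpa using hye)
    rwa [← this]
  obtain ⟨p, hmonic, -, hcoeff, haeval⟩ :=
    LinearMap.exists_monic_and_coeff_mem_pow_and_aeval_eq_zero_of_range_le_smul
      (Rn K n) φ I hrange
  -- evaluate at (X 0)^m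
  set i0 : Fin n := ⟨0, hn⟩
  have hw0 : (X i0 : Rn K n) ^ m ∈ N :=
    Ideal.pow_mem_pow (Ideal.subset_span (Set.mem_range_self i0)) m
  set w0 : N := ⟨(X i0 : Rn K n) ^ m, hw0⟩ with hw0'
  have hpow : ∀ i : ℕ, ((φ ^ i) w0 : Rn K n) = x ^ i * (X i0 : Rn K n) ^ m := by
    intro i
    induction i with
    | zero => simp [hw0']
    | succ i ih =>
        rw [pow_succ', Module.End.mul_apply]
        have hstep : (φ ((φ ^ i) w0) : Rn K n) = x * ((φ ^ i) w0 : Rn K n) := rfl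
        rw [hstep, ih]
        ring
  have heval : Polynomial.eval x p * (X i0 : Rn K n) ^ m = 0 := by
    have h0 : ((Polynomial.aeval φ p) w0 : Rn K n) = 0 := by rw [haeval]; rfl
    rw [Polynomial.aeval_eq_sum_range] at h0
    simp only [LinearMap.sum_apply, LinearMap.smul_apply] at h0
    rw [Submodule.coe_sum] at h0
    simp only [SetLike.val_smul, hpow, smul_eq_mul] at h0
    rw [Polynomial.eval_eq_sum_range, Finset.sum_mul]
    convert h0 using 2 with i
    ring
  have hXm : (X i0 : Rn K n) ^ m ≠ 0 := pow_ne_zero m (X_ne_zero i0)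
  have hev0 : Polynomial.eval x p = 0 := by
    rcases mul_eq_zero.mp heval with h | h
    · exact h
    · exact absurd h hXm
  set t := p.natDegree with ht'
  have ht : 0 < t := by
    by_contra h
    have h0 : p.natDegree = 0 := by omega
    have : p = 1 := (Polynomial.Monic.natDegree_eq_zero hmonic).mp h0
    rw [this] at hev0
    simp at hev0
  refine ⟨t, fun i => p.coeff (t - i), ht, ?_, ?_⟩
  · intro i h1 h2
    have := hcoeff (t - i)
    have harith : t - (t - i) = i := by omega
    rwa [harith] at this
  · have hsum : Polynomial.eval x p
        = ∑ i ∈ Finset.range (t + 1), p.coeff i * x ^ i := by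
      rw [Polynomial.eval_eq_sum_range]
    rw [Finset.sum_range_succ] at hsum
    have hlead : p.coeff t = 1 := hmonic.coeff_natDegree
    have hre : ∑ i ∈ Finset.range t, p.coeff i * x ^ i
        = ∑ i ∈ Finset.Icc 1 t, p.coeff (t - i) * x ^ (t - i) := by
      refine Finset.sum_bij' (fun i _ => t - i) (fun j _ => t - j) ?_ ?_ ?_ ?_ ?_
      · intro a ha
        simp only [Finset.mem_range] at ha
        simp only [Finset.mem_Icc]
        omega
      · intro a ha
        simp only [Finset.mem_Icc] at ha
        simp only [Finset.mem_range]
        omega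
      · intro a ha
        simp only [Finset.mem_range] at ha
        omega
      · intro a ha
        simp only [Finset.mem_Icc] at ha
        omega
      · intro a ha
        simp only [Finset.mem_range] at ha
        congr 2 <;> omega
    rw [hre, hlead, one_mul] at hsum
    rw [add_comm]
    rw [← hsum]
    exact hev0

lemma comp_step {I : Ideal (Rn K n)} {d : ℕ} {y : Rn K n} (hy : y.IsHomogeneous d)
    {md : ℕ} (hcol : ∀ q ∈ Mi K n ^ md, q * y ∈ comp I d) {m : ℕ} (hm : md ≤ m) :
    ∀ q ∈ Mi K n ^ m, y * q ∈ I * Mi K n ^ m := by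
  intro q hqm
  have hexp : y * q = ∑ e ∈ Finset.range (q.totalDegree + 1),
      y * homogeneousComponent e q := by
    conv_lhs => rw [← q.sum_homogeneousComponent, Finset.mul_sum]
  rw [hexp]
  refine Ideal.sum_mem _ fun e _ => ?_
  by_cases hem : e < m
  · rw [hc_eq_zero_of_mem_Mi_pow hqm hem, mul_zero]
    exact Ideal.zero_mem _
  · push_neg at hem
    have hqe : homogeneousComponent e q ∈ Mi K n ^ m := hc_mem_Mi_pow hqm e
    have hqmd : homogeneousComponent e q ∈ Mi K n ^ md :=
      Ideal.pow_le_pow_right hm hqe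
    have hzC : homogeneousComponent e q * y ∈ comp I d := hcol _ hqmd
    set z := homogeneousComponent e q * y with hzdef
    have hzhom : z.IsHomogeneous (e + d) :=
      (homogeneousComponent_isHomogeneous e q).mul hy
    have hzz : homogeneousComponent (d + e) z = z := by
      rw [homogeneousComponent_of_mem hzhom, if_pos (by omega)]
    have := (hc_comp_mem_mul hzC).1 e
    rw [hzz] at this
    have hle : I * Mi K n ^ e ≤ I * Mi K n ^ m :=
      Ideal.mul_mono le_rfl (Ideal.pow_le_pow_right hem)
    rw [mul_comm y (homogeneousComponent e q)]
    exact hle this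

lemma n_pos_of_linear {ℓ : Rn K n} (h0 : ℓ ≠ 0) (h : ℓ.IsHomogeneous 1) : 0 < n := by
  rcases Nat.eq_zero_or_pos n with hn | hn
  · exfalso
    subst hn
    obtain ⟨c, rfl⟩ := MvPolynomial.C_surjective (Fin 0) ℓ
    exact one_ne_zero ((isHomogeneous_C (Fin 0) c).inj_right h h0).symm
  · exact hn

end AuxStmt7

/-- if the linear form `ℓ` avoids all primes in `⋃_j Ass(R/I_⟨j⟩)` other
than `M`, then `I ⊆ IS ∩ R ⊆ Ī` for `S = R[M/ℓ]`. -/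
theorem stmt7 (K : Type) [Field K] (n : ℕ) (I : Ideal (Rn K n)) (hI : IsHomog I)
    (ℓ : Rn K n) (hℓ0 : ℓ ≠ 0) (hℓ : ℓ.IsHomogeneous 1)
    (hU : ∀ j : ℕ, ∀ P ∈ associatedPrimes (Rn K n) (Rn K n ⧸ comp I j),
      P ≠ Mi K n → ℓ ∉ P) :
    I ≤ contraction I ℓ ∧ ∀ x ∈ contraction I ℓ, x ∈ intClo I := by
  constructor
  · exact Ideal.le_comap_map
  · intro x hx
    have hn : 0 < n := n_pos_of_linear hℓ0 hℓ
    have hℓM : ℓ ∈ Mi K n := by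
      have := mem_Mi_pow_of_isHomogeneous hℓ
      rwa [pow_one] at this
    -- clear denominators
    obtain ⟨k, w, hwmem, hweq⟩ := contraction_denom hℓM hx
    have hinj : Function.Injective (algebraMap (Rn K n) (Localization.Away ℓ)) :=
      IsLocalization.injective (Localization.Away ℓ)
        (powers_le_nonZeroDivisors_of_noZeroDivisors hℓ0)
    have h1 : ℓ ^ k * x ∈ I * Mi K n ^ k := by
      rw [hinj hweq]
      exact hwmem
    -- homogeneous components of x
    have hlk : (ℓ ^ k).IsHomogeneous k := by simpa using hℓ.pow k
    have hcomp : ∀ d : ℕ, ℓ ^ k * homogeneousComponent d x ∈ comp I d := by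
      intro d
      have e1 : homogeneousComponent (d + k) (ℓ ^ k * x)
          = ℓ ^ k * homogeneousComponent d x := by
        rw [hc_mul_homog hlk (d + k), if_pos (by omega), Nat.add_sub_cancel]
      have := hc_mem_comp_of_mem_mul hI h1 d
      rwa [e1] at this
    -- colon bounds from associated primes
    have hcolon : ∀ d : ℕ, ∃ md : ℕ, ∀ q ∈ Mi K n ^ md,
        q * homogeneousComponent d x ∈ comp I d := by
      intro d
      exact ass2 (comp I d) ℓ (hU d) (hcomp d)
    choose md hmd using hcolon
    set m : ℕ := (Finset.range (x.totalDegree + 1)).sup md with hmdef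
    -- x * (Mi ^ m) ⊆ I * Mi ^ m
    have hmain : ∀ q ∈ Mi K n ^ m, x * q ∈ I * Mi K n ^ m := by
      intro q hq
      have hexp : x * q = ∑ d ∈ Finset.range (x.totalDegree + 1),
          homogeneousComponent d x * q := by
        conv_lhs => rw [← x.sum_homogeneousComponent, Finset.sum_mul]
      rw [hexp]
      refine Ideal.sum_mem _ fun d hd => ?_
      exact comp_step (homogeneousComponent_isHomogeneous d x) (hmd d)
        (Finset.le_sup hd) q hq
    exact det_trick hn hmain

end
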